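/- With all weights equal to 1, the generating function of Dyck N-meanders counted by length equals D^+(1,1;t) = -(1 - 4t - sqrt(1-8t^2)) / (4t(1-3t)), with series expansion 1 + 2t + 6t^2 + 16t^3 + 48t^4 + ... -/

import Mathlib

/-- A classical walk `v` is compatible with the N-walk `w` if they have the same
length and the `i`-th step of `v` belongs to the `i`-th N-step of `w`. -/
def Compatible (v : List ℤ) (w : List (Finset ℤ)) : Prop :=
  List.Forall₂ (· ∈ ·) v w

/-- The reachable points of an N-walk: endpoints of all compatible classical walks. -/
def reach (w : List (Finset ℤ)) : Set ℤ :=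
  {r | ∃ v : List ℤ, Compatible v w ∧ v.sum = r}

/-- Minimal reachable point. -/
noncomputable def wmin (w : List (Finset ℤ)) : ℤ := sInf (reach w)

/-- Maximal reachable point. -/
noncomputable def wmax (w : List (Finset ℤ)) : ℤ := sSup (reach w)

/-- A Dyck N-walk: every N-step is one of {-1}, {1}, {-1,1}. -/
def IsDyckNWalk (w : List (Finset ℤ)) : Prop :=
  ∀ s ∈ w, s = {-1} ∨ s = {1} ∨ s = ({-1, 1} : Finset ℤ)

/-- A Motzkin N-walk: every N-step is a nonempty subset of {-1,0,1}. -/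
def IsMotzkinNWalk (w : List (Finset ℤ)) : Prop :=
  ∀ s ∈ w, s.Nonempty ∧ s ⊆ ({-1, 0, 1} : Finset ℤ)

/-- A classical meander: all partial sums are nonnegative. -/
def IsMeanderW (v : List ℤ) : Prop := ∀ n : ℕ, 0 ≤ (v.take n).sum

/-- An N-bridge: compatible with at least one classical walk ending at 0. -/
def IsNBridge (w : List (Finset ℤ)) : Prop := ∃ v, Compatible v w ∧ v.sum = 0

/-- An N-meander: compatible with at least one classical meander. -/
def IsNMeander (w : List (Finset ℤ)) : Prop := ∃ v, Compatible v w ∧ IsMeanderW v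

/-- An N-excursion: compatible with at least one classical excursion. -/
def IsNExcursion (w : List (Finset ℤ)) : Prop :=
  ∃ v, Compatible v w ∧ IsMeanderW v ∧ v.sum = 0

/-- Number of Dyck N-meanders of length n. -/
noncomputable def dyckMeanderCount (n : ℕ) : ℕ :=
  Nat.card {w : List (Finset ℤ) // w.length = n ∧ IsDyckNWalk w ∧ IsNMeander w}

namespace DM

def val : Fin 3 → ℤ := fun i => if i = 0 then -1 else 1
def gst : Fin 3 → Finset ℤ := fun i => if i = 0 then {-1} else if i = 1 then {1} else {-1, 1}
def gin : Finset ℤ → Fin 3 := fun s => if s = {-1} then 0 else if s = {1} then 1 else 2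
def fmax : Finset ℤ → ℤ := fun s => if s = {-1} then -1 else 1
def ht (u : List (Fin 3)) : ℤ := (u.map val).sum

lemma neOne : ({-1} : Finset ℤ) ≠ {1} := by decide
lemma neTwo : ({-1} : Finset ℤ) ≠ {-1, 1} := by decide
lemma neThree : ({1} : Finset ℤ) ≠ {-1, 1} := by decide

lemma take_sum_le {v v' : List ℤ} (h : List.Forall₂ (· ≤ ·) v v') :
    ∀ n, (v.take n).sum ≤ (v'.take n).sum := by
  induction h with
  | nil => intro n; simp
  | cons hab h ih =>
    intro n
    cases n with
    | zero => simp
    | succ n => simpa using add_le_add hab (ih n)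

lemma fmax_mem {s : Finset ℤ} (hs : s = {-1} ∨ s = {1} ∨ s = ({-1, 1} : Finset ℤ)) :
    fmax s ∈ s := by
  rcases hs with h | h | h <;> subst h <;> simp [fmax, neOne.symm, neTwo.symm] <;> decide

lemma le_fmax {s : Finset ℤ} (hs : s = {-1} ∨ s = {1} ∨ s = ({-1, 1} : Finset ℤ))
    {x : ℤ} (hx : x ∈ s) : x ≤ fmax s := by
  rcases hs with h | h | h <;> subst h <;>
    simp [fmax, neOne.symm, neTwo.symm] at hx ⊢ <;> omega

lemma compat_le {v : List ℤ} {w : List (Finset ℤ)} (hc : Compatible v w) (hd : IsDyckNWalk w) :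
    List.Forall₂ (· ≤ ·) v (w.map fmax) := by
  induction hc with
  | nil => simp
  | @cons a b v w hab h ih =>
    have hd' : IsDyckNWalk w := fun s hs => hd s (List.mem_cons_of_mem _ hs)
    exact List.Forall₂.cons (le_fmax (hd b List.mem_cons_self) hab) (ih hd')

lemma nmeander_iff {w : List (Finset ℤ)} (hd : IsDyckNWalk w) :
    IsNMeander w ↔ IsMeanderW (w.map fmax) := by
  constructor
  · rintro ⟨v, hc, hm⟩ n
    exact le_trans (hm n) (take_sum_le (compat_le hc hd) n)
  · intro hm
    refine ⟨w.map fmax, ?_, hm⟩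
    rw [Compatible, List.forall₂_map_left_iff]
    exact List.forall₂_same.2 fun s hs => fmax_mem (hd s hs)

lemma gin_gst (i : Fin 3) : gin (gst i) = i := by
  fin_cases i <;>
    simp [gin, gst, neOne, neTwo, neThree, neOne.symm, neTwo.symm, neThree.symm]

lemma gst_gin {s : Finset ℤ} (hs : s = {-1} ∨ s = {1} ∨ s = ({-1, 1} : Finset ℤ)) :
    gst (gin s) = s := by
  rcases hs with h | h | h <;> subst h <;>
    simp [gin, gst, neOne, neTwo, neThree, neOne.symm, neTwo.symm, neThree.symm]

lemma fmax_gst (i : Fin 3) : fmax (gst i) = val i := by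
  fin_cases i <;> simp [fmax, gst, val, neOne.symm, neTwo.symm]

lemma val_gin {s : Finset ℤ} (hs : s = {-1} ∨ s = {1} ∨ s = ({-1, 1} : Finset ℤ)) :
    val (gin s) = fmax s := by
  rcases hs with h | h | h <;> subst h <;>
    simp [gin, fmax, val, neOne, neTwo, neThree, neOne.symm, neTwo.symm, neThree.symm]

def equivA (n : ℕ) :
    {w : List (Finset ℤ) // w.length = n ∧ IsDyckNWalk w ∧ IsNMeander w} ≃
      {u : List (Fin 3) // u.length = n ∧ IsMeanderW (u.map val)} where
  toFun w := ⟨w.1.map gin, by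
    obtain ⟨hl, hd, hm⟩ := w.2
    refine ⟨by simp [hl], ?_⟩
    have : (w.1.map gin).map val = w.1.map fmax := by
      rw [List.map_map]
      exact List.map_congr_left fun s hs => val_gin (hd s hs)
    rw [this]
    exact (nmeander_iff hd).1 hm⟩
  invFun u := ⟨u.1.map gst, by
    obtain ⟨hl, hm⟩ := u.2
    have hd : IsDyckNWalk (u.1.map gst) := by
      intro s hs
      simp only [List.mem_map] at hs
      obtain ⟨i, _, rfl⟩ := hs
      fin_cases i <;> simp [gst]
    refine ⟨by simp [hl], hd, (nmeander_iff hd).2 ?_⟩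
    have : (u.1.map gst).map fmax = u.1.map val := by
      rw [List.map_map]
      exact List.map_congr_left fun i _ => fmax_gst i
    rw [this]; exact hm⟩
  left_inv w := by
    obtain ⟨hl, hd, hm⟩ := w.2
    apply Subtype.ext
    simp only [List.map_map]
    exact (List.map_congr_left fun s hs => gst_gin (hd s hs)).trans (List.map_id _)
  right_inv u := by
    apply Subtype.ext
    simp only [List.map_map]
    exact (List.map_congr_left fun i _ => congrArg _ (gin_gst i)).trans (List.map_id _)

/-- structural meander predicate via suffixes -/
def D : List (Fin 3) → Prop
  | [] => True
  | i :: u => D u ∧ 0 ≤ val i + ht u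

lemma take_concat_sum (v : List ℤ) (x : ℤ) (n : ℕ) :
    ((v ++ [x]).take n).sum = (v.take n).sum + if v.length < n then x else 0 := by
  rw [List.take_append, List.sum_append]
  congr 1
  rcases le_or_gt n v.length with hn | hn
  · rw [(by omega : n - v.length = 0), List.take_zero, List.sum_nil, if_neg (by omega)]
  · rw [List.take_of_length_le (by simp; omega), List.sum_singleton, if_pos hn]

lemma meander_concat (v : List ℤ) (x : ℤ) :
    IsMeanderW (v ++ [x]) ↔ IsMeanderW v ∧ 0 ≤ v.sum + x := by
  constructor
  · intro h
    have hv : ∀ n, 0 ≤ (v.take n).sum + if v.length < n then x else 0 := by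
      intro n; have := h n; rwa [take_concat_sum] at this
    constructor
    · intro n
      rcases le_or_gt n v.length with hn | hn
      · have := hv n; rwa [if_neg (by omega), add_zero] at this
      · have := hv v.length
        rw [if_neg (by omega), add_zero, List.take_of_length_le le_rfl] at this
        rwa [List.take_of_length_le (by omega)]
    · have := hv (v.length + 1)
      rwa [if_pos (by omega), List.take_of_length_le (by omega)] at this
  · rintro ⟨hm, hs⟩ n
    rw [take_concat_sum]
    rcases le_or_gt n v.length with hn | hn
    · rw [if_neg (by omega), add_zero]; exact hm n
    · rw [if_pos hn, List.take_of_length_le (by omega)]; exact hs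

lemma D_iff_meander_reverse : ∀ u : List (Fin 3), D u ↔ IsMeanderW (u.reverse.map val)
  | [] => by simp [D]; intro n; simp [IsMeanderW]
  | i :: u => by
    rw [D, D_iff_meander_reverse u]
    simp only [List.reverse_cons, List.map_append, List.map_cons, List.map_nil]
    rw [meander_concat]
    have : (u.reverse.map val).sum = ht u := by
      rw [ht, List.map_reverse, List.sum_reverse]
    rw [this]
    constructor
    · rintro ⟨h1, h2⟩; exact ⟨h1, by omega⟩
    · rintro ⟨h1, h2⟩; exact ⟨h1, by omega⟩

def equivB (n : ℕ) :
    {u : List (Fin 3) // u.length = n ∧ IsMeanderW (u.map val)} ≃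
      {u : List (Fin 3) // u.length = n ∧ D u} where
  toFun u := ⟨u.1.reverse, by
    obtain ⟨hl, hm⟩ := u.2
    refine ⟨by simp [hl], (D_iff_meander_reverse _).2 ?_⟩
    rwa [List.reverse_reverse]⟩
  invFun u := ⟨u.1.reverse, by
    obtain ⟨hl, hD⟩ := u.2
    exact ⟨by simp [hl], (D_iff_meander_reverse _).1 hD⟩⟩
  left_inv u := Subtype.ext (List.reverse_reverse _)
  right_inv u := Subtype.ext (List.reverse_reverse _)

open Set

def A (n : ℕ) (h : ℤ) : Set (List (Fin 3)) := {u | u.length = n ∧ D u ∧ ht u = h}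
def B (n : ℕ) : Set (List (Fin 3)) := {u | u.length = n ∧ D u}

lemma finB (n : ℕ) : (B n).Finite := (List.finite_length_eq _ n).subset fun u hu => hu.1
lemma finA (n : ℕ) (h : ℤ) : (A n h).Finite :=
  (List.finite_length_eq _ n).subset fun u hu => hu.1

lemma ht_nil : ht [] = 0 := rfl
lemma ht_cons (i : Fin 3) (u : List (Fin 3)) : ht (i :: u) = val i + ht u := by simp [ht]

lemma D_ht_nonneg {u : List (Fin 3)} (hD : D u) : 0 ≤ ht u := by
  cases u with
  | nil => simp [ht]
  | cons i u => rw [ht_cons]; exact hD.2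

lemma A_zero_zero : A 0 0 = {([] : List (Fin 3))} := by
  ext u
  simp only [A, Set.mem_setOf_eq, Set.mem_singleton_iff, List.length_eq_zero_iff]
  constructor
  · rintro ⟨rfl, _⟩; rfl
  · rintro rfl; exact ⟨rfl, trivial, rfl⟩

lemma A_zero_ne {h : ℤ} (hh : h ≠ 0) : A 0 h = ∅ := by
  ext u
  simp only [A, Set.mem_setOf_eq, Set.mem_empty_iff_false, iff_false, not_and,
    List.length_eq_zero_iff]
  rintro rfl _
  simpa [ht_nil] using hh ∘ Eq.symm

lemma A_neg (n : ℕ) {h : ℤ} (hh : h < 0) : A n h = ∅ := by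
  ext u
  simp only [A, Set.mem_setOf_eq, Set.mem_empty_iff_false, iff_false, not_and]
  rintro _ hD hht
  have := D_ht_nonneg hD
  omega

lemma A_succ (n : ℕ) {h : ℤ} (hh : 0 ≤ h) :
    A (n+1) h = (List.cons 0 '' A n (h+1)) ∪ (List.cons 1 '' A n (h-1)) ∪
      (List.cons 2 '' A n (h-1)) := by
  ext u
  simp only [A, Set.mem_setOf_eq, Set.mem_union, Set.mem_image]
  constructor
  · rintro ⟨hl, hD, hht⟩
    cases u with
    | nil => simp at hl
    | cons i u' =>
      obtain ⟨hD', hge⟩ := hD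
      rw [ht_cons] at hht
      have hl' : u'.length = n := by simpa using hl
      fin_cases i
      · exact Or.inl (Or.inl ⟨u', ⟨hl', hD', by simp [val] at hht ⊢; omega⟩, rfl⟩)
      · exact Or.inl (Or.inr ⟨u', ⟨hl', hD', by simp [val] at hht ⊢; omega⟩, rfl⟩)
      · exact Or.inr ⟨u', ⟨hl', hD', by simp [val] at hht ⊢; omega⟩, rfl⟩
  · rintro ((⟨u', ⟨hl', hD', hht'⟩, rfl⟩ | ⟨u', ⟨hl', hD', hht'⟩, rfl⟩) |
      ⟨u', ⟨hl', hD', hht'⟩, rfl⟩)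
    · exact ⟨by simp [hl'], ⟨hD', by simp [val]; omega⟩, by rw [ht_cons]; simp [val]; omega⟩
    · exact ⟨by simp [hl'], ⟨hD', by simp [val]; omega⟩, by rw [ht_cons]; simp [val]; omega⟩
    · exact ⟨by simp [hl'], ⟨hD', by simp [val]; omega⟩, by rw [ht_cons]; simp [val]; omega⟩

lemma B_succ (n : ℕ) :
    B (n+1) = (List.cons 1 '' B n) ∪ (List.cons 2 '' B n) ∪
      (List.cons 0 '' (B n \ A n 0)) := by
  ext u
  simp only [B, A, Set.mem_setOf_eq, Set.mem_union, Set.mem_image, Set.mem_diff]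
  constructor
  · rintro ⟨hl, hD⟩
    cases u with
    | nil => simp at hl
    | cons i u' =>
      obtain ⟨hD', hge⟩ := hD
      have hl' : u'.length = n := by simpa using hl
      fin_cases i
      · refine Or.inr ⟨u', ⟨⟨hl', hD'⟩, ?_⟩, rfl⟩
        rintro ⟨-, -, hht0⟩
        simp [val] at hge; omega
      · exact Or.inl (Or.inl ⟨u', ⟨hl', hD'⟩, rfl⟩)
      · exact Or.inl (Or.inr ⟨u', ⟨hl', hD'⟩, rfl⟩)
  · rintro ((⟨u', ⟨hl', hD'⟩, rfl⟩ | ⟨u', ⟨hl', hD'⟩, rfl⟩) |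
      ⟨u', ⟨⟨hl', hD'⟩, hne⟩, rfl⟩)
    · exact ⟨by simp [hl'], hD', by have := D_ht_nonneg hD'; simp [val]; omega⟩
    · exact ⟨by simp [hl'], hD', by have := D_ht_nonneg hD'; simp [val]; omega⟩
    · refine ⟨by simp [hl'], hD', ?_⟩
      have h0 : ht u' ≠ 0 := fun h => hne ⟨hl', hD', h⟩
      have := D_ht_nonneg hD'
      simp [val]; omega

lemma disj_cons_image {i j : Fin 3} (hij : i ≠ j) (s t : Set (List (Fin 3))) :
    Disjoint (List.cons i '' s) (List.cons j '' t) := by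
  rw [Set.disjoint_left]
  rintro u ⟨a, -, rfl⟩ ⟨b, -, hb⟩
  simp only [List.cons.injEq] at hb
  exact hij hb.1.symm

lemma ncard_A_succ (n : ℕ) {h : ℤ} (hh : 0 ≤ h) :
    (A (n+1) h).ncard = (A n (h+1)).ncard + 2 * (A n (h-1)).ncard := by
  rw [A_succ n hh]
  have f0 := (finA n (h+1)).image (List.cons 0)
  have f1 := (finA n (h-1)).image (List.cons 1)
  have f2 := (finA n (h-1)).image (List.cons 2)
  rw [Set.ncard_union_eq (Disjoint.union_left
      (disj_cons_image (by decide) _ _) (disj_cons_image (by decide) _ _)) (f0.union f1) f2,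
    Set.ncard_union_eq (disj_cons_image (by decide) _ _) f0 f1,
    Set.ncard_image_of_injective _ (List.cons_injective),
    Set.ncard_image_of_injective _ (List.cons_injective),
    Set.ncard_image_of_injective _ (List.cons_injective)]
  ring

lemma ncard_A_le_B (n : ℕ) (h : ℤ) : (A n h).ncard ≤ (B n).ncard :=
  Set.ncard_le_ncard (fun u hu => ⟨hu.1, hu.2.1⟩) (finB n)

lemma ncard_B_succ (n : ℕ) :
    (B (n+1)).ncard + (A n 0).ncard = 3 * (B n).ncard := by
  rw [B_succ]
  have f1 := (finB n).image (List.cons 1)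
  have f2 := (finB n).image (List.cons 2)
  have f0 := ((finB n).diff : (B n \ A n 0).Finite).image (List.cons 0)
  rw [Set.ncard_union_eq (Disjoint.union_left
      (disj_cons_image (by decide) _ _) (disj_cons_image (by decide) _ _)) (f1.union f2) f0,
    Set.ncard_union_eq (disj_cons_image (by decide) _ _) f1 f2,
    Set.ncard_image_of_injective _ (List.cons_injective),
    Set.ncard_image_of_injective _ (List.cons_injective),
    Set.ncard_image_of_injective _ (List.cons_injective)]
  have hsub : A n 0 ⊆ B n := fun u hu => ⟨hu.1, hu.2.1⟩
  rw [Set.ncard_diff hsub (finA n 0)]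
  have := ncard_A_le_B n 0
  omega

def p : ℕ → ℕ → ℕ
  | 0, 0 => 1
  | 0, _+1 => 0
  | n+1, 0 => p n 1
  | n+1, h+1 => p n (h+2) + 2 * p n h

lemma ncard_A_eq_p : ∀ n : ℕ, ∀ h : ℕ, (A n (h : ℤ)).ncard = p n h := by
  intro n
  induction n with
  | zero =>
    intro h
    cases h with
    | zero => simp only [Nat.cast_zero]; rw [A_zero_zero]; simp [p]
    | succ h =>
      rw [A_zero_ne (by exact_mod_cast h.succ_ne_zero)]
      simp [p]
  | succ n ih =>
    intro h
    cases h with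
    | zero =>
      simp only [Nat.cast_zero]
      rw [ncard_A_succ n le_rfl, A_neg n (by norm_num : (0:ℤ) - 1 < 0)]
      have h1 := ih 1
      push_cast at h1
      rw [Set.ncard_empty]
      show (A n (0+1)).ncard + 2 * 0 = p n 1
      rw [(by norm_num : (0:ℤ)+1 = 1), h1]
      omega
    | succ h =>
      have : (((h+1:ℕ)):ℤ) = (h:ℤ) + 1 := by push_cast; ring
      rw [this, ncard_A_succ n (by positivity)]
      have e1 : ((h:ℤ)+1+1) = ((h+2:ℕ):ℤ) := by push_cast; ring
      have e2 : ((h:ℤ)+1-1) = ((h:ℕ):ℤ) := by push_cast; ring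
      rw [e1, e2, ih (h+2), ih h]
      rfl

def q (n h : ℕ) : ℕ :=
  if (n + h) % 2 = 0 then
    2 ^ ((n + h) / 2) * (Nat.choose n ((n+h)/2) - Nat.choose n ((n+h)/2 + 1))
  else 0

lemma choose_succ_le {n u : ℕ} (hu : n ≤ 2*u + 1) : n.choose (u+1) ≤ n.choose u := by
  have h := Nat.choose_succ_right_eq n u
  have h2 : n.choose u * (n - u) ≤ n.choose u * (u + 1) := Nat.mul_le_mul_left _ (by omega)
  rw [← h] at h2
  exact Nat.le_of_mul_le_mul_right h2 (by omega)

lemma p_eq_q : ∀ n h, p n h = q n h := by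
  intro n
  induction n with
  | zero =>
    intro h
    cases h with
    | zero => simp [p, q]
    | succ h =>
      show 0 = q 0 (h+1)
      unfold q
      by_cases hp : (0 + (h+1)) % 2 = 0
      · rw [if_pos hp, Nat.choose_eq_zero_of_lt (by omega : 0 < (0+(h+1))/2)]
        simp
      · rw [if_neg hp]
  | succ n ih =>
    intro h
    cases h with
    | zero =>
      show p n 1 = q (n+1) 0
      rw [ih 1]
      unfold q
      by_cases hp : (n + 1) % 2 = 0
      · obtain ⟨m, rfl⟩ : ∃ m, n = 2*m+1 := ⟨n/2, by omega⟩
        rw [if_pos (by omega), if_pos (by omega)]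
        have e1 : (2*m+1+1)/2 = m+1 := by omega
        rw [e1]
        have pascal1 : Nat.choose (2*m+1+1) (m+1) =
            Nat.choose (2*m+1) m + Nat.choose (2*m+1) (m+1) := Nat.choose_succ_succ _ _
        have pascal2 : Nat.choose (2*m+1+1) (m+1+1) =
            Nat.choose (2*m+1) (m+1) + Nat.choose (2*m+1) (m+2) := Nat.choose_succ_succ _ _
        have hsymm : Nat.choose (2*m+1) m = Nat.choose (2*m+1) (m+1) := by
          have := Nat.choose_symm (by omega : m ≤ 2*m+1)
          rw [(by omega : 2*m+1-m = m+1)] at this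
          exact this.symm
        rw [pascal1, pascal2, hsymm, (show m+1+1 = m+2 by omega)]
        congr 1
        have i2 : Nat.choose (2*m+1) (m+2) ≤ Nat.choose (2*m+1) (m+1) :=
          choose_succ_le (by omega)
        omega
      · rw [if_neg (by omega), if_neg (by omega)]
    | succ h =>
      show p n (h+2) + 2 * p n h = q (n+1) (h+1)
      rw [ih (h+2), ih h]
      unfold q
      by_cases hp : (n + h) % 2 = 0
      · obtain ⟨k, hk⟩ : ∃ k, n + h = 2*k := ⟨(n+h)/2, by omega⟩
        rw [if_pos (by omega), if_pos (by omega), if_pos (by omega)]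
        have e1 : (n + (h+2))/2 = k+1 := by omega
        have e2 : (n + h)/2 = k := by omega
        have e3 : (n+1 + (h+1))/2 = k+1 := by omega
        rw [e1, e2, e3]
        have pascal1 : Nat.choose (n+1) (k+1) =
            Nat.choose n k + Nat.choose n (k+1) := Nat.choose_succ_succ _ _
        have pascal2 : Nat.choose (n+1) (k+1+1) =
            Nat.choose n (k+1) + Nat.choose n (k+2) := Nat.choose_succ_succ _ _
        rw [pascal1, pascal2, (show k+1+1 = k+2 by omega)]
        have i1 : Nat.choose n (k+1) ≤ Nat.choose n k := choose_succ_le (by omega)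
        have i2 : Nat.choose n (k+2) ≤ Nat.choose n (k+1) := choose_succ_le (by omega)
        have hz : (Nat.choose n k + Nat.choose n (k+1)) -
            (Nat.choose n (k+1) + Nat.choose n (k+2)) =
            (Nat.choose n (k+1) - Nat.choose n (k+2)) +
            (Nat.choose n k - Nat.choose n (k+1)) := by omega
        rw [hz]
        ring
      · rw [if_neg (by omega), if_neg (by omega), if_neg (by omega)]

lemma sub_choose_eq_catalan (k : ℕ) :
    Nat.choose (2*k) k - Nat.choose (2*k) (k+1) = catalan k := by
  have h1 : (k+1) * catalan k = Nat.centralBinom k := succ_mul_catalan_eq_centralBinom k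
  have h2 : Nat.choose (2*k) (k+1) * (k+1) = Nat.choose (2*k) k * (2*k - k) :=
    Nat.choose_succ_right_eq _ _
  have h3 : Nat.choose (2*k) (k+1) ≤ Nat.choose (2*k) k := choose_succ_le (by omega)
  have hcb : Nat.centralBinom k = Nat.choose (2*k) k := rfl
  rw [(by omega : 2*k - k = k)] at h2
  rw [hcb] at h1
  apply Nat.eq_of_mul_eq_mul_left (show 0 < k+1 by omega)
  zify [h3]
  zify at h1 h2
  linear_combination (-1 : ℤ) * h2 - h1

lemma p_even (k : ℕ) : p (2*k) 0 = 2^k * catalan k := by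
  rw [p_eq_q]
  unfold q
  rw [if_pos (by omega), (by omega : (2*k+0)/2 = k)]
  rw [sub_choose_eq_catalan]

lemma p_odd (k : ℕ) : p (2*k+1) 0 = 0 := by
  rw [p_eq_q]
  unfold q
  rw [if_neg (by omega)]

lemma count_eq (n : ℕ) : dyckMeanderCount n = (B n).ncard := by
  rw [dyckMeanderCount, Nat.card_congr ((equivA n).trans (equivB n)),
    ← Nat.card_coe_set_eq]
  rfl

lemma B_zero : B 0 = {([] : List (Fin 3))} := by
  ext u
  simp only [B, Set.mem_setOf_eq, Set.mem_singleton_iff, List.length_eq_zero_iff]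
  constructor
  · rintro ⟨rfl, _⟩; rfl
  · rintro rfl; exact ⟨rfl, trivial⟩

lemma count_zero : (B 0).ncard = 1 := by rw [B_zero, Set.ncard_singleton]

lemma count_succ (n : ℕ) : (B (n+1)).ncard + p n 0 = 3 * (B n).ncard := by
  have h := ncard_B_succ n
  have h2 := ncard_A_eq_p n 0
  rw [Nat.cast_zero] at h2
  omega

/-! ### Analytic part -/

noncomputable def T (n : ℕ) : ℕ := (B n).ncard

lemma T_zero : T 0 = 1 := count_zero
lemma T_succ (n : ℕ) : T (n+1) + p n 0 = 3 * T n := count_succ n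
lemma count_eq_T (n : ℕ) : dyckMeanderCount n = T n := count_eq n

lemma centralBinom_le_four_pow (n : ℕ) : Nat.centralBinom n ≤ 4^n := by
  induction n with
  | zero => simp [Nat.centralBinom]
  | succ n ih =>
    have h := Nat.succ_mul_centralBinom_succ n
    have hle : (n+1) * Nat.centralBinom (n+1) ≤ (n+1) * (4 * Nat.centralBinom n) := by
      rw [h]
      nlinarith [Nat.centralBinom_pos n]
    have h2 : Nat.centralBinom (n+1) ≤ 4 * Nat.centralBinom n :=
      Nat.le_of_mul_le_mul_left hle (by omega)
    calc Nat.centralBinom (n+1) ≤ 4 * Nat.centralBinom n := h2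
      _ ≤ 4 * 4^n := Nat.mul_le_mul_left 4 ih
      _ = 4^(n+1) := by ring

lemma succ_mul_catalan_le (k : ℕ) : (k+1) * catalan k ≤ 4^k := by
  rw [succ_mul_catalan_eq_centralBinom]
  exact centralBinom_le_four_pow k

lemma catalan_le (k : ℕ) : catalan k ≤ 4^k :=
  le_trans (Nat.le_mul_of_pos_left _ (by omega)) (succ_mul_catalan_le k)

lemma log_nine_lt : Real.log 9 < 8/3 := by
  have h9 : (9 : ℝ) = 2^3 * (9/8) := by norm_num
  rw [h9, Real.log_mul (by norm_num) (by norm_num), Real.log_pow]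
  have h1 : Real.log 2 < 0.6931471808 := Real.log_two_lt_d9
  have h2 : Real.log (9/8) ≤ 9/8 - 1 := by
    have := Real.log_le_sub_one_of_pos (show (0:ℝ) < 9/8 by norm_num)
    linarith
  push_cast
  nlinarith

lemma catalan_hasSum {x : ℝ} (hx0 : 0 < x) (hx : x < 2/9) :
    HasSum (fun k : ℕ => (catalan k : ℝ) * x ^ k) ((1 - Real.sqrt (1 - 4*x)) / (2*x)) := by
  set c : ℕ → ℝ := fun k => (catalan k : ℝ) * x ^ k with hc
  have hcnn : ∀ k, 0 ≤ c k := fun k => by positivity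
  have hbound : ∀ k, c k ≤ (4*x)^k := by
    intro k
    have hck : (catalan k : ℝ) ≤ 4^k := by exact_mod_cast catalan_le k
    calc c k = (catalan k : ℝ) * x^k := rfl
      _ ≤ 4^k * x^k := mul_le_mul_of_nonneg_right hck (by positivity)
      _ = (4*x)^k := (mul_pow _ _ _).symm
  have h4x0 : (0:ℝ) ≤ 4*x := by positivity
  have h4x1 : 4*x < 1 := by linarith
  have hsummable : Summable c :=
    Summable.of_nonneg_of_le hcnn hbound (summable_geometric_of_lt_one h4x0 h4x1)
  have hS := hsummable.hasSum
  set S := ∑' k, c k with hSdef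
  have hnorm : Summable (fun k => ‖c k‖) := by
    have : (fun k => ‖c k‖) = c := funext fun k => Real.norm_of_nonneg (hcnn k)
    rw [this]; exact hsummable
  have hCauchy := hasSum_sum_range_mul_of_summable_norm hnorm hnorm
  rw [← hSdef] at hCauchy
  -- turn Cauchy product into the shifted catalan series
  have key : (fun n : ℕ => x * ∑ k ∈ Finset.range (n+1), c k * c (n-k))
      = fun n : ℕ => c (n+1) := by
    funext n
    have hsum : ∑ k ∈ Finset.range (n+1), c k * c (n-k)
        = ((∑ k ∈ Finset.range (n+1), catalan k * catalan (n-k) : ℕ) : ℝ) * x^n := by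
      push_cast
      rw [Finset.sum_mul]
      refine Finset.sum_congr rfl fun k hk => ?_
      simp only [Finset.mem_range] at hk
      have hxx : x^k * x^(n-k) = x^n := by rw [← pow_add]; congr 1; omega
      simp only [hc]
      calc (catalan k : ℝ) * x^k * ((catalan (n-k) : ℝ) * x^(n-k))
          = (catalan k : ℝ) * (catalan (n-k):ℝ) * (x^k * x^(n-k)) := by ring
        _ = (catalan k : ℝ) * (catalan (n-k):ℝ) * x^n := by rw [hxx]
    have hcat : ∑ k ∈ Finset.range (n+1), catalan k * catalan (n-k) = catalan (n+1) := by
      rw [catalan_succ n, ← Fin.sum_univ_eq_sum_range]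
    rw [hsum, hcat, hc]
    push_cast
    ring
  have hCauchy2 : HasSum (fun n : ℕ => c (n+1)) (x * (S * S)) := by
    rw [← key]
    exact hCauchy.mul_left x
  have hshift : HasSum (fun n : ℕ => c (n+1)) (S - 1) := by
    refine (hasSum_nat_add_iff 1).mpr ?_
    have hc0 : c 0 = 1 := by simp [hc]
    simpa [hc0] using hS
  have hquad : x * (S * S) = S - 1 := hCauchy2.unique hshift
  -- upper bound on S
  have hlog := Real.hasSum_pow_div_log_of_abs_lt_one
    (x := 4*x) (by rw [abs_of_nonneg h4x0]; exact h4x1)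
  have hlogs : HasSum (fun k : ℕ => (4*x)^(k+1)/(k+1) * (1/(4*x)))
      (-Real.log (1 - 4*x) * (1/(4*x))) := hlog.mul_right _
  have hSle : S ≤ -Real.log (1 - 4*x) * (1/(4*x)) := by
    refine hS.tsum_eq ▸ hasSum_le ?_ hS hlogs
    intro k
    have h1 : ((k:ℝ)+1) * (catalan k : ℝ) ≤ 4^k := by exact_mod_cast succ_mul_catalan_le k
    have hk1 : (0:ℝ) < (k:ℝ)+1 := by positivity
    have hrhs : (4*x)^(k+1)/((k:ℝ)+1) * (1/(4*x)) = (4*x)^k / ((k:ℝ)+1) := by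
      rw [pow_succ]
      field_simp
    rw [hrhs, le_div_iff₀ hk1]
    calc c k * ((k:ℝ)+1) = (((k:ℝ)+1) * (catalan k:ℝ)) * x^k := by simp only [hc]; ring
      _ ≤ 4^k * x^k := mul_le_mul_of_nonneg_right h1 (by positivity)
      _ = (4*x)^k := (mul_pow _ _ _).symm
  -- numeric bound
  have h14 : (1:ℝ)/9 < 1 - 4*x := by linarith
  have hsq : Real.sqrt (1-4*x) ^ 2 = 1 - 4*x := Real.sq_sqrt (by linarith)
  have hsqgt : (1:ℝ)/3 < Real.sqrt (1-4*x) := by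
    rw [show (1:ℝ)/3 = Real.sqrt ((1:ℝ)/9) by
      rw [show (1:ℝ)/9 = (1/3)^2 by norm_num, Real.sqrt_sq (by norm_num)]]
    exact Real.sqrt_lt_sqrt (by norm_num) h14
  have hlog9 : -Real.log (1-4*x) < 8/3 := by
    have h1 : Real.log ((1-4*x)⁻¹) < Real.log 9 := by
      apply Real.log_lt_log (by positivity)
      rw [inv_lt_comm₀ (by linarith) (by norm_num)]
      linarith
    rw [Real.log_inv] at h1
    linarith [log_nine_lt]
  have hSlt : S < (1 + Real.sqrt (1-4*x)) / (2*x) := by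
    have hub : -Real.log (1 - 4*x) * (1/(4*x)) < (1 + Real.sqrt (1-4*x)) / (2*x) := by
      rw [mul_one_div, div_lt_div_iff₀ (by positivity) (by positivity)]
      nlinarith [hsqgt]
    linarith
  -- root selection
  set s := Real.sqrt (1-4*x) with hsdef
  have hfactor : (2*x*S - (1-s)) * (2*x*S - (1+s)) = 4*x*(x*(S*S) - S + 1) := by
    have : s^2 = 1-4*x := hsq
    nlinarith [this]
  have hzero : (2*x*S - (1-s)) * (2*x*S - (1+s)) = 0 := by
    rw [hfactor, hquad]; ring
  have hne : 2*x*S - (1+s) ≠ 0 := by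
    have h2x : (0:ℝ) < 2*x := by positivity
    have h2 : S * (2*x) < 1+s := (lt_div_iff₀ h2x).mp hSlt
    nlinarith
  have hroot : 2*x*S = 1-s := by
    rcases mul_eq_zero.mp hzero with h | h
    · linarith
    · exact absurd h hne
  have hSval : S = (1-s)/(2*x) := by
    rw [eq_div_iff (by positivity)]
    linarith [hroot]
  exact hSval ▸ hS
lemma e_hasSum {t : ℝ} (ht0 : 0 < t) (ht : t < 1/3) :
    HasSum (fun n : ℕ => (p n 0 : ℝ) * t ^ n)
      ((1 - Real.sqrt (1 - 8*t^2)) / (4*t^2)) := by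
  have hx0 : 0 < 2*t^2 := by positivity
  have hx : 2*t^2 < 2/9 := by nlinarith
  have h := catalan_hasSum hx0 hx
  have hinj : Function.Injective (fun k : ℕ => 2*k) := fun a b hab => by dsimp at hab; omega
  have hvanish : ∀ n ∉ Set.range (fun k : ℕ => 2*k), (p n 0 : ℝ) * t^n = 0 := by
    intro n hn
    obtain ⟨k, rfl⟩ : ∃ k, n = 2*k+1 := by
      rcases Nat.even_or_odd n with he | ho
      · obtain ⟨m, hm⟩ := he
        exact absurd ⟨m, by dsimp; omega⟩ hn
      · obtain ⟨m, hm⟩ := ho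
        exact ⟨m, by omega⟩
    rw [p_odd]
    simp
  have hcomp : ((fun n : ℕ => (p n 0 : ℝ) * t^n) ∘ (fun k : ℕ => 2*k))
      = fun k : ℕ => (catalan k : ℝ) * (2*t^2)^k := by
    funext k
    simp only [Function.comp_apply]
    rw [p_even]
    push_cast
    rw [mul_pow, pow_mul]
    ring
  refine (hinj.hasSum_iff hvanish).mp ?_
  rw [hcomp, show (1:ℝ)-8*t^2 = 1-4*(2*t^2) by ring, show (4:ℝ)*t^2 = 2*(2*t^2) by ring]
  exact h

lemma main_hasSum {t : ℝ} (ht0 : 0 < t) (ht : t < 1/3) :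
    HasSum (fun n : ℕ => (T n : ℝ) * t ^ n)
      (-(1 - 4*t - Real.sqrt (1 - 8*t^2)) / (4*t*(1-3*t))) := by
  have h3t0 : (0:ℝ) ≤ 3*t := by positivity
  have h3t1 : 3*t < 1 := by linarith
  have hgeo : HasSum (fun n : ℕ => (3*t)^n) (1-3*t)⁻¹ :=
    hasSum_geometric_of_lt_one h3t0 h3t1
  have hE := e_hasSum ht0 ht
  set E := (1 - Real.sqrt (1-8*t^2))/(4*t^2) with hEdef
  have hnorm1 : Summable (fun n => ‖(p n 0 : ℝ) * t^n‖) := by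
    have hfe : (fun n => ‖(p n 0 : ℝ) * t^n‖) = fun n => (p n 0 : ℝ) * t^n :=
      funext fun n => Real.norm_of_nonneg (by positivity)
    rw [hfe]; exact hE.summable
  have hnorm2 : Summable (fun n => ‖(3*t)^n‖) := by
    have hfe : (fun n => ‖(3*t)^n‖) = fun n => (3*t)^n :=
      funext fun n => Real.norm_of_nonneg (by positivity)
    rw [hfe]; exact hgeo.summable
  have hconv := hasSum_sum_range_mul_of_summable_norm hnorm1 hnorm2
  rw [hE.tsum_eq, hgeo.tsum_eq] at hconv
  set conv := fun n : ℕ => ∑ k ∈ Finset.range (n+1), (p k 0 : ℝ) * t^k * (3*t)^(n-k)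
    with hconvdef
  have hTrec : ∀ n : ℕ, (T (n+1) : ℝ) = 3 * T n - p n 0 := by
    intro n
    have h := congrArg (fun m : ℕ => (m : ℝ)) (T_succ n)
    push_cast at h
    linarith
  have claim : ∀ n : ℕ, (T (n+1) : ℝ) * t^(n+1) = (3*t)^(n+1) - t * conv n := by
    intro n
    induction n with
    | zero =>
      rw [hTrec 0]
      have hc0 : conv 0 = 1 := by
        simp only [hconvdef]
        norm_num
        rfl
      rw [hc0, T_zero, show p 0 0 = 1 from rfl]
      push_cast
      ring
    | succ n ih =>
      have hconvsucc : conv (n+1) = 3*t*(conv n) + (p (n+1) 0 : ℝ) * t^(n+1) := by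
        simp only [hconvdef]
        rw [Finset.sum_range_succ, Finset.mul_sum]
        congr 1
        · refine Finset.sum_congr rfl fun k hk => ?_
          simp only [Finset.mem_range] at hk
          rw [show n+1-k = (n-k)+1 by omega, pow_succ]
          ring
        · simp
      rw [hTrec (n+1), hconvsucc]
      calc (3*(T (n+1):ℝ) - (p (n+1) 0 : ℝ)) * t^(n+1+1)
          = 3*t*((T (n+1):ℝ) * t^(n+1)) - (p (n+1) 0:ℝ) * t^(n+1) * t := by ring
        _ = 3*t*((3*t)^(n+1) - t*conv n) - (p (n+1) 0:ℝ)*t^(n+1)*t := by rw [ih]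
        _ = (3*t)^(n+1+1) - t*(3*t*conv n + (p (n+1) 0:ℝ)*t^(n+1)) := by ring
  have h1 : HasSum (fun n : ℕ => (3*t)^(n+1)) (3*t*(1-3*t)⁻¹) := by
    have hm := hgeo.mul_left (3*t)
    have hfun : (fun n : ℕ => 3*t*(3*t)^n) = fun n : ℕ => (3*t)^(n+1) :=
      funext fun n => (pow_succ' _ _).symm
    rwa [hfun] at hm
  have h2 : HasSum (fun n => t * conv n) (t * (E * (1-3*t)⁻¹)) := hconv.mul_left t
  have h3 : HasSum (fun n : ℕ => (T (n+1):ℝ) * t^(n+1))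
      (3*t*(1-3*t)⁻¹ - t*(E*(1-3*t)⁻¹)) := by
    have hs := h1.sub h2
    have hfun : (fun n : ℕ => (3*t)^(n+1) - t*conv n)
        = fun n : ℕ => (T (n+1):ℝ) * t^(n+1) := funext fun n => (claim n).symm
    rwa [hfun] at hs
  have h4 := (hasSum_nat_add_iff (f := fun n : ℕ => (T n : ℝ) * t^n) 1).mp h3
  have hval : 3*t*(1-3*t)⁻¹ - t*(E*(1-3*t)⁻¹) + ∑ i ∈ Finset.range 1, (T i : ℝ)*t^i
      = -(1 - 4*t - Real.sqrt (1 - 8*t^2)) / (4*t*(1-3*t)) := by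
    rw [Finset.sum_range_one, T_zero, hEdef]
    have ht3 : (1:ℝ)-3*t ≠ 0 := by intro hh; rw [sub_eq_zero] at hh; linarith
    have htne : t ≠ 0 := ne_of_gt ht0
    push_cast
    field_simp
    ring
  rwa [hval] at h4


lemma p00 : p 0 0 = 1 := rfl
lemma p10 : p 1 0 = 0 := rfl
lemma p20 : p 2 0 = 2 := rfl
lemma p30 : p 3 0 = 0 := rfl

lemma Tvals : T 0 = 1 ∧ T 1 = 2 ∧ T 2 = 6 ∧ T 3 = 16 ∧ T 4 = 48 := by
  have h0 := T_zero
  have h1 := T_succ 0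
  have h2 := T_succ 1
  have h3 := T_succ 2
  have h4 := T_succ 3
  rw [p00] at h1
  rw [p10] at h2
  rw [p20] at h3
  rw [p30] at h4
  norm_num at h1 h2 h3 h4
  omega

end DM

/-- with all weights 1, D⁺(1,1;t) = -(1 - 4t - √(1-8t²)) / (4t(1-3t)),
with expansion 1 + 2t + 6t² + 16t³ + 48t⁴ + ⋯ . -/
theorem dyck_meander_gf :
    dyckMeanderCount 0 = 1 ∧ dyckMeanderCount 1 = 2 ∧ dyckMeanderCount 2 = 6 ∧
    dyckMeanderCount 3 = 16 ∧ dyckMeanderCount 4 = 48 ∧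
    ∀ t : ℝ, 0 < t → t < 1 / 3 →
      HasSum (fun n : ℕ => (dyckMeanderCount n : ℝ) * t ^ n)
        (-(1 - 4 * t - Real.sqrt (1 - 8 * t ^ 2)) / (4 * t * (1 - 3 * t))) := by
  obtain ⟨v0, v1, v2, v3, v4⟩ := DM.Tvals
  refine ⟨?_, ?_, ?_, ?_, ?_, ?_⟩
  · rw [DM.count_eq_T]; exact v0
  · rw [DM.count_eq_T]; exact v1
  · rw [DM.count_eq_T]; exact v2
  · rw [DM.count_eq_T]; exact v3
  · rw [DM.count_eq_T]; exact v4
  · intro t ht0 ht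
    have h := DM.main_hasSum ht0 (by linarith)
    have hfun : (fun n : ℕ => (dyckMeanderCount n : ℝ) * t^n)
        = fun n : ℕ => (DM.T n : ℝ) * t^n :=
      funext fun n => by rw [DM.count_eq_T]
    rw [hfun]
    exact h
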